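/- Let Γ be a linearly ordered (additive) abelian group, R a commutative ring, and (x_i)_{i∈I} a family of Hahn series in HahnSeries Γ R indexed by a set I. Then (x_i)_{i∈I} is summable (i.e., ⋃_{i∈I} supp(x_i) is well-ordered and for each g ∈ Γ only finitely many i ∈ I satisfy g ∈ supp(x_i)) if and only if there do not exist an injective sequence (i_n)_{n∈ℕ} in I and exponents g_n ∈ supp(x_{i_n}) (not necessarily distinct) such that g_{n+1} ≤ g_n for every n ∈ ℕ. -/

import Mathlib

/-- A family of Hahn series is summable if the union of supports is partially
well-ordered (equivalently, well-ordered, since `Γ` is linearly ordered) and each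
exponent lies in the support of only finitely many members of the family. -/
def IsSummable {Γ R ι : Type*} [AddCommGroup Γ] [LinearOrder Γ] [IsOrderedAddMonoid Γ] [CommRing R]
    (f : ι → HahnSeries Γ R) : Prop :=
  (⋃ i, (f i).support).IsPWO ∧ ∀ g : Γ, {i | (f i).coeff g ≠ 0}.Finite

/-- The sum of a summable family of Hahn series. -/
noncomputable def sumOf {Γ R ι : Type*} [AddCommGroup Γ] [LinearOrder Γ] [IsOrderedAddMonoid Γ] [CommRing R]
    (f : ι → HahnSeries Γ R) (hf : IsSummable f) : HahnSeries Γ R :=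
  HahnSeries.SummableFamily.hsum ⟨f, hf.1, hf.2⟩

/-- Auxiliary: from a sequence `j : ℕ → I` with finite fibers, extract a strictly
increasing `φ` with `j ∘ φ` injective. -/
lemma exists_injective_subseq {I : Type*} (j : ℕ → I)
    (hfib : ∀ a : I, {n | j n = a}.Finite) :
    ∃ φ : ℕ → ℕ, StrictMono φ ∧ Function.Injective (j ∘ φ) := by
  classical
  have key : ∀ (s : Finset I) (N : ℕ), ∃ m, N < m ∧ j m ∉ s := by
    intro s N
    have hbad : ({m | j m ∈ s} ∪ Set.Iic N).Finite := by
      refine Set.Finite.union ?_ (Set.finite_Iic N)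
      have : {m | j m ∈ s} = ⋃ a ∈ s, {n | j n = a} := by
        ext m; simp [eq_comm]
      rw [this]
      exact Set.Finite.biUnion s.finite_toSet (fun a _ => hfib a)
    obtain ⟨m, hm⟩ := hbad.infinite_compl.nonempty
    simp only [Set.mem_compl_iff, Set.mem_union, Set.mem_setOf_eq, Set.mem_Iic, not_or,
      not_le] at hm
    exact ⟨m, hm.2, hm.1⟩
  choose F hF1 hF2 using key
  -- ψ n = (index, set of used values)
  let ψ : ℕ → ℕ × Finset I := fun n =>
    Nat.rec (0, {j 0}) (fun _ p => (F p.2 p.1, insert (j (F p.2 p.1)) p.2)) n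
  have hψ : ∀ n, ψ (n + 1) = (F (ψ n).2 (ψ n).1, insert (j (F (ψ n).2 (ψ n).1)) (ψ n).2) :=
    fun n => rfl
  set φ : ℕ → ℕ := fun n => (ψ n).1 with hφ
  have hmono : ∀ n, φ n < φ (n + 1) := by
    intro n; exact hF1 (ψ n).2 (ψ n).1
  have hmemself : ∀ n, j (φ n) ∈ (ψ n).2 := by
    intro n
    cases n with
    | zero => exact Finset.mem_singleton_self _
    | succ k => rw [hψ k]; exact Finset.mem_insert_self _ _
  have hsub : ∀ n, (ψ n).2 ⊆ (ψ (n + 1)).2 := by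
    intro n; rw [hψ n]; exact Finset.subset_insert _ _
  have hsub' : ∀ m n, m ≤ n → (ψ m).2 ⊆ (ψ n).2 := by
    intro m n hmn
    induction hmn with
    | refl => exact subset_rfl
    | step _ ih => exact ih.trans (hsub _)
  have hnotmem : ∀ n, j (φ (n + 1)) ∉ (ψ n).2 := by
    intro n; exact hF2 (ψ n).2 (ψ n).1
  have hne : ∀ m n, m < n → j (φ m) ≠ j (φ n) := by
    intro m n hmn
    obtain ⟨k, rfl⟩ := Nat.exists_eq_add_of_lt hmn
    intro h
    exact hnotmem (m + k) (h ▸ hsub' m (m + k) (Nat.le_add_right m k) (hmemself m))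
  refine ⟨φ, strictMono_nat_of_lt_succ hmono, fun m n h => ?_⟩
  rcases lt_trichotomy m n with hc | hc | hc
  · exact absurd h (hne m n hc)
  · exact hc
  · exact absurd h.symm (hne n m hc)

/-- Summability criterion (order-mirrored form): a family `(x_i)_{i ∈ I}` of Hahn
series is summable if and only if there is no injective sequence `(i_n)` in `I`
together with exponents `g_n ∈ supp (x_{i_n})` forming a weakly decreasing sequence. -/
theorem summable_iff_no_decreasing_sequence {Γ R I : Type*}
    [AddCommGroup Γ] [LinearOrder Γ] [IsOrderedAddMonoid Γ] [CommRing R] (f : I → HahnSeries Γ R) :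
    IsSummable f ↔
      ¬ ∃ (i : ℕ → I) (g : ℕ → Γ), Function.Injective i ∧
          (∀ n : ℕ, g n ∈ (f (i n)).support) ∧ (∀ n : ℕ, g (n + 1) ≤ g n) := by
  constructor
  · rintro ⟨hpwo, hfin⟩ ⟨i, g, hinj, hg, hdec⟩
    have hanti : Antitone g := antitone_nat_of_succ_le hdec
    have hsub : Set.range g ⊆ ⋃ j, (f j).support := by
      rintro x ⟨n, rfl⟩
      exact Set.mem_iUnion.2 ⟨i n, hg n⟩
    have hwf : (Set.range g).IsWF := hpwo.isWF.subset hsub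
    have hne : (Set.range g).Nonempty := Set.range_nonempty g
    obtain ⟨N, hNeq⟩ := hwf.min_mem hne
    have hN : ∀ n, ¬ g n < g N := by
      intro n h
      exact hwf.not_lt_min hne ⟨n, rfl⟩ (hNeq ▸ h)
    have hconst : ∀ n, N ≤ n → g n = g N :=
      fun n hn => le_antisymm (hanti hn) (not_lt.1 (hN n))
    have hinf : (Set.range fun n => i (n + N)).Infinite :=
      Set.infinite_range_of_injective (fun a b h => by
        have := hinj h; omega)
    refine hinf ((hfin (g N)).subset ?_)
    rintro x ⟨n, rfl⟩
    have := hg (n + N)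
    rw [HahnSeries.mem_support, hconst (n + N) (Nat.le_add_left N n)] at this
    exact this
  · intro hno
    constructor
    · rw [Set.isPWO_iff_isWF, Set.isWF_iff_no_descending_seq]
      intro g' hstrict hmem
      have hj : ∀ n, ∃ a, g' n ∈ (f a).support := by
        intro n
        exact Set.mem_iUnion.1 (hmem n)
      choose j hjmem using hj
      have hfib : ∀ a : I, {n | j n = a}.Finite := by
        intro a
        by_contra hinf
        have hinf' : Set.Infinite {n | j n = a} := hinf
        classical
        have : Infinite {n | j n = a} := hinf'.to_subtype
        let e := Nat.orderEmbeddingOfSet {n | j n = a}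
        have hmem' : ∀ k, g' (e k) ∈ (f a).support := by
          intro k
          have h1 : e k ∈ {n | j n = a} := by
            rw [← Nat.orderEmbeddingOfSet_range {n | j n = a}]
            exact ⟨k, rfl⟩
          have h2 : j (e k) = a := h1
          exact h2 ▸ hjmem (e k)
        have hwf := (f a).isPWO_support.isWF
        rw [Set.isWF_iff_no_descending_seq] at hwf
        exact hwf (fun k => g' (e k)) (fun m n h => hstrict (e.strictMono h)) hmem'
      obtain ⟨φ, hφmono, hφinj⟩ := exists_injective_subseq j hfib
      exact hno ⟨j ∘ φ, g' ∘ φ, hφinj, fun n => hjmem (φ n),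
        fun n => (hstrict (hφmono (Nat.lt_succ_self n))).le⟩
    · intro g₀
      by_contra hinf
      have hinf' : Set.Infinite {i | (f i).coeff g₀ ≠ 0} := hinf
      let e := hinf'.natEmbedding
      refine hno ⟨fun n => (e n).1, fun _ => g₀, fun a b h => e.injective (Subtype.ext h),
        fun n => (e n).2, fun _ => le_rfl⟩
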